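/- Let N ≥ 1 and let K : ℝ^N → ℝ^N be continuously differentiable and invariant under uniform translation: K(u + c • 𝟙) = K(u) for all u ∈ ℝ^N and c ∈ ℝ, where 𝟙 = (1,…,1). Let u : ℝ → ℝ^N satisfy, for all t, u'(t) = −(D K(u(t)))ᵀ (K(u(t))), where D K(x) denotes the (Fréchet) derivative of K at x, viewed as an N×N matrix, and ᵀ is the transpose. Then (a) Σᵢ uᵢ(t) is constant in t, and (b) t ↦ ‖K(u(t))‖² is nonincreasing. -/

import Mathlib

/-- Along the fourth-order combinatorial Cooper–Rivin curvature flow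
`u' = -(DK(u))ᵀ K(u)` (with `K` invariant under uniform translation, i.e. homogeneity of
degree zero in the metric), the sum `Σᵢ uᵢ` is constant, and the quadratic energy
`‖K(u)‖²` is nonincreasing.  Here the transpose of the Jacobian matrix `DK(x)` is the
adjoint of the Fréchet derivative of `K` at `x` with respect to the Euclidean inner
product. -/
theorem stmt_5 {N : ℕ} (hN : 1 ≤ N)
    (K : EuclideanSpace ℝ (Fin N) → EuclideanSpace ℝ (Fin N)) (hK : ContDiff ℝ 1 K)
    (hinv : ∀ (u : EuclideanSpace ℝ (Fin N)) (c : ℝ),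
      K (u + c • (WithLp.equiv 2 (Fin N → ℝ)).symm (fun _ => 1)) = K u)
    (u : ℝ → EuclideanSpace ℝ (Fin N))
    (hu : ∀ t : ℝ,
      HasDerivAt u (-(ContinuousLinearMap.adjoint (fderiv ℝ K (u t)) (K (u t)))) t) :
    (∀ t : ℝ, ∑ i, u t i = ∑ i, u 0 i) ∧
      (∀ t s : ℝ, t ≤ s → ‖K (u s)‖ ^ 2 ≤ ‖K (u t)‖ ^ 2) := by
  set one : EuclideanSpace ℝ (Fin N) := (WithLp.equiv 2 (Fin N → ℝ)).symm (fun _ => 1)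
    with hone
  have hKd : Differentiable ℝ K := hK.differentiable one_ne_zero
  -- the Jacobian kills the all-ones vector
  have hA1 : ∀ x : EuclideanSpace ℝ (Fin N), fderiv ℝ K x one = 0 := by
    intro x
    have h1 : HasDerivAt (fun c : ℝ => x + c • one) one 0 := by
      simpa using ((hasDerivAt_id (0:ℝ)).smul_const one).const_add x
    have h2 : HasDerivAt (fun c : ℝ => K (x + c • one)) (fderiv ℝ K x one) 0 := by
      have := (hKd (x + (0:ℝ) • one)).hasFDerivAt.comp_hasDerivAt 0 h1
      simpa [Function.comp_def] using this
    have h3 : (fun c : ℝ => K (x + c • one)) = fun _ => K x := funext fun c => hinv x c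
    rw [h3] at h2
    exact h2.unique (hasDerivAt_const 0 _)
  -- (a)
  have hsum : ∀ t : ℝ, HasDerivAt (fun t => ∑ i, u t i) 0 t := by
    intro t
    have hL : HasDerivAt (fun t => (inner ℝ one (u t) : ℝ))
        (inner ℝ one (-(ContinuousLinearMap.adjoint (fderiv ℝ K (u t)) (K (u t))))) t :=
      (innerSL ℝ one).hasFDerivAt.comp_hasDerivAt t (hu t)
    have hval : (inner ℝ one (-(ContinuousLinearMap.adjoint (fderiv ℝ K (u t)) (K (u t)))) : ℝ)
        = 0 := by
      rw [inner_neg_right, real_inner_comm, ContinuousLinearMap.adjoint_inner_left, hA1,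
        inner_zero_right, neg_zero]
    have hfun : (fun t => (inner ℝ one (u t) : ℝ)) = fun t => ∑ i, u t i := by
      funext s
      simp [hone, PiLp.inner_apply, WithLp.equiv_symm_apply, PiLp.toLp_apply]
    rw [hval, hfun] at hL
    exact hL
  have hdiff : Differentiable ℝ (fun t => ∑ i, u t i) := fun t => (hsum t).differentiableAt
  have ha : ∀ t : ℝ, ∑ i, u t i = ∑ i, u 0 i := fun t =>
    is_const_of_deriv_eq_zero hdiff (fun t => (hsum t).deriv) t 0
  refine ⟨ha, ?_⟩
  -- (b)
  have hg : ∀ t : ℝ, HasDerivAt (fun t => ‖K (u t)‖ ^ 2)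
      (-(2 * ‖ContinuousLinearMap.adjoint (fderiv ℝ K (u t)) (K (u t))‖ ^ 2)) t := by
    intro t
    set v := ContinuousLinearMap.adjoint (fderiv ℝ K (u t)) (K (u t)) with hv
    have hw : HasDerivAt (fun t => K (u t)) (fderiv ℝ K (u t) (-v)) t :=
      (hKd (u t)).hasFDerivAt.comp_hasDerivAt t (hu t)
    have hinner : HasDerivAt (fun t => (inner ℝ (K (u t)) (K (u t)) : ℝ))
        ((inner ℝ (K (u t)) (fderiv ℝ K (u t) (-v)) : ℝ)
          + inner ℝ (fderiv ℝ K (u t) (-v)) (K (u t))) t := hw.inner ℝ hw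
    have hval : (inner ℝ (K (u t)) (fderiv ℝ K (u t) (-v)) : ℝ)
          + inner ℝ (fderiv ℝ K (u t) (-v)) (K (u t)) = -(2 * ‖v‖ ^ 2) := by
      have h1 : (inner ℝ (fderiv ℝ K (u t) (-v)) (K (u t)) : ℝ) = -‖v‖ ^ 2 := by
        rw [← ContinuousLinearMap.adjoint_inner_right, ← hv, inner_neg_left,
          real_inner_self_eq_norm_sq]
      have h2 := (real_inner_comm ((fderiv ℝ K (u t)) (-v)) (K (u t))).trans h1
      rw [h1, h2]; ring
    have hfun : (fun t => (inner ℝ (K (u t)) (K (u t)) : ℝ)) = fun t => ‖K (u t)‖ ^ 2 := by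
      funext s; rw [real_inner_self_eq_norm_sq]
    rw [hval, hfun] at hinner
    exact hinner
  intro t s hts
  have := antitone_of_deriv_nonpos (f := fun t => ‖K (u t)‖ ^ 2)
    (fun t => (hg t).differentiableAt) (fun t => by
      rw [(hg t).deriv]; exact neg_nonpos.mpr (by positivity))
  exact this hts
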